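/- For f(t) = (1+t)^k with k a nonnegative integer, if 18·f((√7−1)/3) > 24 f(−1) + 192(f(1/2)+f(−1/2)) + 144 f(0), which holds for all k ≥ 75, then E_f(C_{D_4}) < E_f(C_θ) for every θ with sin 2θ ≠ 0 and sinθ ≠ cosθ. -/
import Mathlib


open Real

noncomputable def energyC (f : ℝ → ℝ) (θ : ℝ) : ℝ :=
  18 * (f 0 + f (Real.sin (2 * θ)))
    + 36 * (f (Real.sin θ) + f (Real.cos θ))
    + 36 * (f (Real.sin θ ^ 2 - Real.cos θ ^ 2 / 2) + f (Real.cos θ ^ 2 - Real.sin θ ^ 2 / 2))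
    + 72 * (f (-(Real.sin θ / 2)) + f (-(Real.cos θ / 2)) + f (Real.sin (2 * θ) / 4)
        + f (-(Real.sin (2 * θ) / 2)))
    + 84 * f (-(1/2))

noncomputable def energyD4 (f : ℝ → ℝ) : ℝ :=
  24 * f (-1) + 192 * (f (1/2) + f (-(1/2))) + 144 * f 0

lemma sqrt7_gt : (5291/2000 : ℝ) < Real.sqrt 7 := by
  have := Real.lt_sqrt (x := (5291/2000 : ℝ)) (y := 7) (by norm_num)
  rw [this]; norm_num

lemma hquad : 3 * ((Real.sqrt 7 - 1)/3)^2 + 2 * ((Real.sqrt 7 - 1)/3) - 2 = 0 := by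
  have h7 : Real.sqrt 7 ^ 2 = 7 := Real.sq_sqrt (by norm_num)
  nlinarith [h7]

lemma key_cases (θ : ℝ) :
    (Real.sqrt 7 - 1)/3 ≤ Real.sin θ ∨ (Real.sqrt 7 - 1)/3 ≤ Real.cos θ ∨
    (Real.sqrt 7 - 1)/3 ≤ Real.sin (2*θ) ∨
    (Real.sqrt 7 - 1)/3 ≤ Real.sin θ^2 - Real.cos θ^2/2 ∨
    (Real.sqrt 7 - 1)/3 ≤ Real.cos θ^2 - Real.sin θ^2/2 := by
  set α := (Real.sqrt 7 - 1)/3 with hα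
  by_contra h
  push_neg at h
  obtain ⟨h1, h2, h3, h4, h5⟩ := h
  rw [Real.sin_two_mul] at h3
  have hid : Real.sin θ^2 + Real.cos θ^2 = 1 := Real.sin_sq_add_cos_sq θ
  have hq : 3 * α^2 + 2*α - 2 = 0 := hquad
  have hhalf : (1:ℝ)/2 < α := by
    rw [hα]; nlinarith [sqrt7_gt]
  set s := Real.sin θ
  set c := Real.cos θ
  have hs2 : s^2 < 1 - α^2 := by nlinarith
  have hc2 : c^2 < 1 - α^2 := by nlinarith
  have hs2' : α^2 < s^2 := by nlinarith
  have hc2' : α^2 < c^2 := by nlinarith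
  have hs : s < -α := by nlinarith
  have hc : c < -α := by nlinarith
  nlinarith [mul_pos (by linarith : (0:ℝ) < -α - s) (by linarith : (0:ℝ) < -α - c)]

lemma base75 : (18:ℝ) * (3097/2000)^75 > 192*(3/2)^75 + 336 := by norm_num

lemma ind_bound : ∀ k, 75 ≤ k → (18:ℝ) * (3097/2000)^k > 192*(3/2)^k + 336 := by
  intro k hk
  induction k, hk using Nat.le_induction with
  | base => exact base75
  | succ n hn ih =>
    have hpow : (0:ℝ) < (3/2)^n := by positivity
    calc (18:ℝ) * (3097/2000)^(n+1) = (3097/2000) * (18 * (3097/2000)^n) := by ring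
      _ > (3097/2000) * (192*(3/2)^n + 336) := by
          apply mul_lt_mul_of_pos_left ih (by norm_num)
      _ ≥ 192*(3/2)^(n+1) + 336 := by
          rw [pow_succ]
          nlinarith [hpow]

lemma lin_comb (x0 x1 x2 x3 x4 x5 x6 x7 x8 x9 x10 X : ℝ)
    (h0 : 0 ≤ x0) (h1 : 0 ≤ x1) (h2 : 0 ≤ x2) (h3 : 0 ≤ x3) (h4 : 0 ≤ x4)
    (h5 : 0 ≤ x5) (h6 : 0 ≤ x6) (h7 : 0 ≤ x7) (h8 : 0 ≤ x8) (h9 : 0 ≤ x9)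
    (h10 : 0 ≤ x10)
    (hb : X ≤ x2 ∨ X ≤ x3 ∨ X ≤ x1 ∨ X ≤ x4 ∨ X ≤ x5) :
    18 * X ≤ 18 * (x0 + x1) + 36 * (x2 + x3) + 36 * (x4 + x5)
      + 72 * (x6 + x7 + x8 + x9) + 84 * x10 := by
  rcases hb with h | h | h | h | h <;> linarith

lemma energyC_lb (k : ℕ) (θ : ℝ) :
    18 * (1 + (Real.sqrt 7 - 1)/3)^k ≤ energyC (fun t => (1 + t) ^ k) θ := by
  have hα0 : 0 ≤ (Real.sqrt 7 - 1)/3 := by nlinarith [sqrt7_gt]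
  have hs1 := Real.neg_one_le_sin θ
  have hs1' := Real.sin_le_one θ
  have hc1 := Real.neg_one_le_cos θ
  have hc1' := Real.cos_le_one θ
  have hd1 := Real.neg_one_le_sin (2*θ)
  have hd1' := Real.sin_le_one (2*θ)
  have hid : Real.sin θ^2 + Real.cos θ^2 = 1 := Real.sin_sq_add_cos_sq θ
  have hb : (1 + (Real.sqrt 7 - 1)/3)^k ≤ (1 + Real.sin θ)^k ∨
      (1 + (Real.sqrt 7 - 1)/3)^k ≤ (1 + Real.cos θ)^k ∨
      (1 + (Real.sqrt 7 - 1)/3)^k ≤ (1 + Real.sin (2*θ))^k ∨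
      (1 + (Real.sqrt 7 - 1)/3)^k ≤ (1 + (Real.sin θ^2 - Real.cos θ^2/2))^k ∨
      (1 + (Real.sqrt 7 - 1)/3)^k ≤ (1 + (Real.cos θ^2 - Real.sin θ^2/2))^k := by
    rcases key_cases θ with h | h | h | h | h
    · exact Or.inl (pow_le_pow_left₀ (by linarith) (by linarith) k)
    · exact Or.inr (Or.inl (pow_le_pow_left₀ (by linarith) (by linarith) k))
    · exact Or.inr (Or.inr (Or.inl (pow_le_pow_left₀ (by linarith) (by linarith) k)))
    · exact Or.inr (Or.inr (Or.inr (Or.inl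
        (pow_le_pow_left₀ (by linarith) (by linarith) k))))
    · exact Or.inr (Or.inr (Or.inr (Or.inr
        (pow_le_pow_left₀ (by linarith) (by linarith) k))))
  simp only [energyC]
  exact lin_comb _ _ _ _ _ _ _ _ _ _ _ _
    (by positivity)
    (pow_nonneg (by linarith) k)
    (pow_nonneg (by linarith) k)
    (pow_nonneg (by linarith) k)
    (pow_nonneg (by nlinarith) k)
    (pow_nonneg (by nlinarith) k)
    (pow_nonneg (by linarith) k)
    (pow_nonneg (by linarith) k)
    (pow_nonneg (by linarith) k)
    (pow_nonneg (by linarith) k)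
    (pow_nonneg (by norm_num) k)
    hb

theorem stmt3 (k : ℕ) :
    (18 * (1 + (Real.sqrt 7 - 1) / 3) ^ k > energyD4 (fun t => (1 + t) ^ k) →
      ∀ θ : ℝ, Real.sin (2 * θ) ≠ 0 → Real.sin θ ≠ Real.cos θ →
        energyD4 (fun t => (1 + t) ^ k) < energyC (fun t => (1 + t) ^ k) θ)
    ∧ (75 ≤ k → 18 * (1 + (Real.sqrt 7 - 1) / 3) ^ k > energyD4 (fun t => (1 + t) ^ k)) := by
  constructor
  · intro hk θ _ _
    exact lt_of_lt_of_le hk (energyC_lb k θ)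
  · intro hk
    have hD4 : energyD4 (fun t => (1 + t) ^ k) = 192*(3/2)^k + 192*(1/2)^k + 144 := by
      simp only [energyD4]
      have : (1 + (-1:ℝ))^k = 0 := by
        rw [show (1:ℝ) + -1 = 0 by ring, zero_pow (by omega)]
      rw [this]
      norm_num
      ring
    rw [hD4]
    have h1 : (192:ℝ)*(1/2)^k + 144 ≤ 336 := by
      have : ((1:ℝ)/2)^k ≤ 1 := pow_le_one₀ (by norm_num) (by norm_num)
      linarith
    have h2 : (18:ℝ) * (3097/2000)^k > 192*(3/2)^k + 336 := ind_bound k hk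
    have h3 : ((3097:ℝ)/2000)^k ≤ (1 + (Real.sqrt 7 - 1)/3)^k := by
      apply pow_le_pow_left₀ (by norm_num)
      nlinarith [sqrt7_gt]
    linarith
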